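/- Let f(x₀,x₁,x₂) = a₀x₀ + a₁x₁ + a₂x₂ + a₅x₀x₂ + a₇x₁x₂ + x₀³ + x₁³ + x₀x₁x₂ (i.e., a₈ = 0). Then for every t, the point Q = (0:0:1:0) is the unique singular point at infinity of the projective closure of {f = t}, and if a₂ ≠ a₅a₇ it is a singularity of type A₁ (nondegenerate critical point of the local defining equation). -/

import Mathlib

open MvPolynomial

/-- Homogenization of `f = a₀x₀ + a₁x₁ + a₂x₂ + a₅x₀x₂ + a₇x₁x₂ + x₀³ + x₁³ + x₀x₁x₂`
(nodal cubic top part, `a₈ = 0`), with the fiber parameter `t` included. -/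
noncomputable def Fnodal (a0 a1 a2 a5 a7 t : ℂ) : MvPolynomial (Fin 4) ℂ :=
  C a0 * X 0 * X 3 ^ 2 + C a1 * X 1 * X 3 ^ 2 + C a2 * X 2 * X 3 ^ 2 +
    X 3 * (C a5 * X 0 * X 2 + C a7 * X 1 * X 2) +
    X 0 ^ 3 + X 1 ^ 3 + X 0 * X 1 * X 2 - C t * X 3 ^ 3

/-- Local equation of the surface at `Q = (0:0:1:0)` in the chart `x₂ = 1`,
in the variables `(x₀, x₁, x₃)`. -/
noncomputable def gnodal (a0 a1 a2 a5 a7 t : ℂ) : MvPolynomial (Fin 3) ℂ :=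
  C a0 * X 0 * X 2 ^ 2 + C a1 * X 1 * X 2 ^ 2 + C a2 * X 2 ^ 2 +
    C a5 * X 0 * X 2 + C a7 * X 1 * X 2 + X 0 ^ 3 + X 1 ^ 3 + X 0 * X 1 - C t * X 2 ^ 3

set_option maxHeartbeats 1000000 in
/-- With `a₈ = 0`: for every `t`, the point `Q = (0:0:1:0)` is the unique singular
point at infinity of the projective closure of `{f = t}`, and if `a₂ ≠ a₅ a₇`
it is a singularity of type `A₁` (nondegenerate critical point of the local equation). -/
theorem nodal_Q_unique_singular_and_A1 (a0 a1 a2 a5 a7 : ℂ) :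
    ∀ t : ℂ,
      (eval (fun j : Fin 4 => if j = 2 then (1 : ℂ) else 0) (Fnodal a0 a1 a2 a5 a7 t) = 0 ∧
        ∀ i : Fin 4, eval (fun j : Fin 4 => if j = 2 then (1 : ℂ) else 0)
          (pderiv i (Fnodal a0 a1 a2 a5 a7 t)) = 0) ∧
      (∀ p : Fin 4 → ℂ, p ≠ 0 → p 3 = 0 →
        eval p (Fnodal a0 a1 a2 a5 a7 t) = 0 →
        (∀ i : Fin 4, eval p (pderiv i (Fnodal a0 a1 a2 a5 a7 t)) = 0) →
        ∃ c : ℂ, c ≠ 0 ∧ p = fun j => c * (if j = 2 then 1 else 0)) ∧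
      (a2 ≠ a5 * a7 →
        (∀ i : Fin 3, eval 0 (pderiv i (gnodal a0 a1 a2 a5 a7 t)) = 0) ∧
        (Matrix.of fun i j : Fin 3 =>
          eval 0 (pderiv i (pderiv j (gnodal a0 a1 a2 a5 a7 t)))).det ≠ 0) := by
  intro t
  refine ⟨⟨?_, ?_⟩, ?_, ?_⟩
  · simp [Fnodal]
  · intro i
    fin_cases i <;> simp [Fnodal, pderiv_mul, pderiv_pow]
  · intro p hp h3 _ hD
    have h0 := hD 0; have h1 := hD 1; have h2 := hD 2
    simp [Fnodal, pderiv_mul, pderiv_pow, h3] at h0 h1 h2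
    have hp0 : p 0 = 0 ∧ p 1 = 0 := by
      rcases h2 with h | h
      · refine ⟨h, ?_⟩
        rw [h, mul_zero, add_zero] at h1
        exact pow_eq_zero_iff two_ne_zero |>.1 (by linear_combination h1 / 3)
      · refine ⟨?_, h⟩
        rw [h, mul_zero, add_zero] at h0
        exact pow_eq_zero_iff two_ne_zero |>.1 (by linear_combination h0 / 3)
    obtain ⟨e0, e1⟩ := hp0
    refine ⟨p 2, ?_, ?_⟩
    · intro h2z
      apply hp; funext j; fin_cases j <;> simp [e0, e1, h2z, h3]
    · funext j; fin_cases j <;> simp [e0, e1, h3]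
  · intro ha
    constructor
    · intro i
      fin_cases i <;> simp [gnodal, pderiv_mul, pderiv_pow]
    · have H : (Matrix.of fun i j : Fin 3 =>
          eval 0 (pderiv i (pderiv j (gnodal a0 a1 a2 a5 a7 t)))) =
          !![0,1,a5; 1,0,a7; a5,a7,2*a2] := by
        ext i j
        fin_cases i <;> fin_cases j <;>
          simp [gnodal, pderiv_mul, pderiv_pow, map_ofNat] <;> ring
      rw [H, Matrix.det_fin_three]
      intro h
      simp at h
      exact ha (by linear_combination -h / 2)
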